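/- Let n ≥ 1 and p ≥ 1. For every nonzero ξ ∈ ℝ^{4n}, the first-order symbol map σ_0^{(p)}(ξ) : ⊙^p ℂ² → Λ^1 ℂ^{2n} ⊗ ⊙^{p−1} ℂ², given by (σ_0^{(p)}(ξ)ϑ)(A₀; A'₂,…,A'_p) = ∑_{A'∈{0,1}} ξ_{A₀}{}^{A'} ϑ(A', A'₂,…,A'_p), is injective. -/

import Mathlib

noncomputable section

/-- The complex `2n × 2` matrix `(ξ_{AA'})` associated to `ξ ∈ ℝ^{4n}`:
row `2l` is `(ξ_{4l+1} + i ξ_{4l+2}, −ξ_{4l+3} − i ξ_{4l+4})` and row `2l+1` is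
`(ξ_{4l+3} − i ξ_{4l+4}, ξ_{4l+1} − i ξ_{4l+2})` (using 1-based names, 0-based indices). -/
def xiMat (n : ℕ) (ξ : Fin (4 * n) → ℝ) : Matrix (Fin (2 * n)) (Fin 2) ℂ :=
  Matrix.of fun A A' =>
    if A.val % 2 = 0 then
      (if A'.val = 0 then
        (⟨ξ ⟨4 * (A.val / 2), by have := A.isLt; omega⟩,
          ξ ⟨4 * (A.val / 2) + 1, by have := A.isLt; omega⟩⟩ : ℂ)
      else
        (⟨-ξ ⟨4 * (A.val / 2) + 2, by have := A.isLt; omega⟩,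
          -ξ ⟨4 * (A.val / 2) + 3, by have := A.isLt; omega⟩⟩ : ℂ))
    else
      (if A'.val = 0 then
        (⟨ξ ⟨4 * (A.val / 2) + 2, by have := A.isLt; omega⟩,
          -ξ ⟨4 * (A.val / 2) + 3, by have := A.isLt; omega⟩⟩ : ℂ)
      else
        (⟨ξ ⟨4 * (A.val / 2), by have := A.isLt; omega⟩,
          -ξ ⟨4 * (A.val / 2) + 1, by have := A.isLt; omega⟩⟩ : ℂ))

/-- The raised epsilon symbol on primed indices: `ε^{01} = −1`, `ε^{10} = 1`. -/
def epsUp (a b : Fin 2) : ℂ :=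
  if a.val = 0 ∧ b.val = 1 then -1 else if a.val = 1 ∧ b.val = 0 then 1 else 0

/-- `ξ_A{}^{A'} = ∑_{B'} ξ_{AB'} ε^{B'A'}`. -/
def xiUp (n : ℕ) (ξ : Fin (4 * n) → ℝ) (A : Fin (2 * n)) (A' : Fin 2) : ℂ :=
  ∑ B' : Fin 2, xiMat n ξ A B' * epsUp B' A'

/-- Membership in `Λ^q ℂ^{2n} ⊗ ⊙^p ℂ²`: totally antisymmetric in the `q` unprimed
arguments and totally symmetric in the `p` primed arguments. -/
def IsAltSym (n q p : ℕ) (ϑ : (Fin q → Fin (2 * n)) → (Fin p → Fin 2) → ℂ) : Prop :=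
  (∀ (σ : Equiv.Perm (Fin q)) (a : Fin q → Fin (2 * n)) (b : Fin p → Fin 2),
      ϑ (a ∘ σ) b = ((Equiv.Perm.sign σ : ℤ) : ℂ) * ϑ a b) ∧
  (∀ (σ : Equiv.Perm (Fin p)) (a : Fin q → Fin (2 * n)) (b : Fin p → Fin 2),
      ϑ a (b ∘ σ) = ϑ a b)

/-- The first-order symbol map
`σ_j^{(p+1)}(ξ) : Λ^j ℂ^{2n} ⊗ ⊙^{p+1} ℂ² → Λ^{j+1} ℂ^{2n} ⊗ ⊙^{p} ℂ²`,
`(σϑ)(A₀,…,A_j; B) = (1/(j+1)) ∑_s (−1)^s ∑_{a} ξ_{A_s}{}^{a} ϑ(A₀,…,Â_s,…,A_j; a, B)`. -/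
def symb (n j p : ℕ) (ξ : Fin (4 * n) → ℝ)
    (ϑ : (Fin j → Fin (2 * n)) → (Fin (p + 1) → Fin 2) → ℂ) :
    (Fin (j + 1) → Fin (2 * n)) → (Fin p → Fin 2) → ℂ :=
  fun A B => ((j + 1 : ℕ) : ℂ)⁻¹ * ∑ s : Fin (j + 1), (-1 : ℂ) ^ (s : ℕ) *
    ∑ a : Fin 2, xiUp n ξ (A s) a * ϑ (A ∘ s.succAbove) (Fin.cons a B)

/-- `xiUp` in terms of `xiMat`. -/
lemma xiUp_eq (n : ℕ) (ξ : Fin (4 * n) → ℝ) (A : Fin (2 * n)) (a : Fin 2) :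
    xiUp n ξ A a = if a.val = 0 then xiMat n ξ A 1 else -xiMat n ξ A 0 := by
  fin_cases a <;> simp [xiUp, epsUp, Fin.sum_univ_two]

theorem symb_zero_injective (n p : ℕ) (hn : 1 ≤ n) (ξ : Fin (4 * n) → ℝ) (hξ : ξ ≠ 0)
    (ϑ₁ ϑ₂ : (Fin 0 → Fin (2 * n)) → (Fin (p + 1) → Fin 2) → ℂ)
    (h₁ : IsAltSym n 0 (p + 1) ϑ₁) (h₂ : IsAltSym n 0 (p + 1) ϑ₂)
    (h : symb n 0 p ξ ϑ₁ = symb n 0 p ξ ϑ₂) :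
    ϑ₁ = ϑ₂ := by
  -- locate a nonzero coordinate of ξ
  obtain ⟨i, hi⟩ := Function.ne_iff.mp hξ
  set l : ℕ := i.val / 4 with hldef
  have hil : l < n := by have := i.isLt; omega
  have hA0 : 2 * l < 2 * n := by omega
  have hA1 : 2 * l + 1 < 2 * n := by omega
  set A0 : Fin (2 * n) := ⟨2 * l, hA0⟩
  set A1 : Fin (2 * n) := ⟨2 * l + 1, hA1⟩
  -- abbreviations for the four real coordinates of the l-th block
  set x0 : ℝ := ξ ⟨4 * l, by omega⟩ with hx0
  set x1 : ℝ := ξ ⟨4 * l + 1, by omega⟩ with hx1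
  set x2 : ℝ := ξ ⟨4 * l + 2, by omega⟩ with hx2
  set x3 : ℝ := ξ ⟨4 * l + 3, by omega⟩ with hx3
  have hsum : x0 ^ 2 + x1 ^ 2 + x2 ^ 2 + x3 ^ 2 ≠ 0 := by
    intro hc
    have h0 : x0 = 0 := by nlinarith [sq_nonneg x0, sq_nonneg x1, sq_nonneg x2, sq_nonneg x3]
    have h1 : x1 = 0 := by nlinarith [sq_nonneg x0, sq_nonneg x1, sq_nonneg x2, sq_nonneg x3]
    have h2 : x2 = 0 := by nlinarith [sq_nonneg x0, sq_nonneg x1, sq_nonneg x2, sq_nonneg x3]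
    have h3 : x3 = 0 := by nlinarith [sq_nonneg x0, sq_nonneg x1, sq_nonneg x2, sq_nonneg x3]
    have hall : ∀ j : Fin (4 * n), j.val / 4 = l → ξ j = 0 := by
      intro j hj
      have hj4 : j.val = 4 * l ∨ j.val = 4 * l + 1 ∨ j.val = 4 * l + 2 ∨
          j.val = 4 * l + 3 := by omega
      rcases hj4 with hj4 | hj4 | hj4 | hj4
      · rw [show j = (⟨4 * l, by omega⟩ : Fin (4 * n)) from Fin.ext hj4]; exact h0
      · rw [show j = (⟨4 * l + 1, by omega⟩ : Fin (4 * n)) from Fin.ext hj4]; exact h1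
      · rw [show j = (⟨4 * l + 2, by omega⟩ : Fin (4 * n)) from Fin.ext hj4]; exact h2
      · rw [show j = (⟨4 * l + 3, by omega⟩ : Fin (4 * n)) from Fin.ext hj4]; exact h3
    exact hi (by simpa using hall i rfl)
  -- the four matrix entries
  have m00 : xiMat n ξ A0 0 = (⟨x0, x1⟩ : ℂ) := by
    simp [xiMat, A0, Nat.mul_mod_right, Nat.mul_div_cancel_left]; exact ⟨rfl, rfl⟩
  have m01 : xiMat n ξ A0 1 = (⟨-x2, -x3⟩ : ℂ) := by
    simp [xiMat, A0, Nat.mul_mod_right, Nat.mul_div_cancel_left]; exact ⟨rfl, rfl⟩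
  have hmod : (2 * l + 1) % 2 = 1 := by omega
  have hdiv : (2 * l + 1) / 2 = l := by omega
  have m10 : xiMat n ξ A1 0 = (⟨x2, -x3⟩ : ℂ) := by
    simp [xiMat, A1, hmod, hdiv]; exact ⟨rfl, rfl⟩
  have m11 : xiMat n ξ A1 1 = (⟨x0, -x1⟩ : ℂ) := by
    simp [xiMat, A1, hmod, hdiv]; exact ⟨rfl, rfl⟩
  -- pointwise symbol equation
  have key : ∀ (f : Fin 0 → Fin (2 * n)) (B : Fin p → Fin 2) (A : Fin (2 * n)),
      xiMat n ξ A 1 * (ϑ₁ f (Fin.cons 0 B) - ϑ₂ f (Fin.cons 0 B))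
        - xiMat n ξ A 0 * (ϑ₁ f (Fin.cons 1 B) - ϑ₂ f (Fin.cons 1 B)) = 0 := by
    intro f B A
    have hh := congrFun (congrFun h (fun _ => A)) B
    have hg : ∀ (θ : (Fin 0 → Fin (2 * n)) → (Fin (p + 1) → Fin 2) → ℂ)
        (g : Fin 0 → Fin (2 * n)) (c : Fin (p + 1) → Fin 2), θ g c = θ f c := by
      intro θ g c; rw [Subsingleton.elim g f]
    simp only [symb, Fin.sum_univ_succ, Fin.sum_univ_zero, Fin.sum_univ_two,
      Fin.val_zero, pow_zero, Nat.zero_add, Nat.cast_one, inv_one, one_mul,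
      add_zero, hg ϑ₁, hg ϑ₂] at hh
    rw [xiUp_eq, xiUp_eq] at hh
    simp only [Fin.val_zero, Fin.val_one] at hh
    norm_num at hh
    linear_combination hh
  funext f b
  have hb : b = Fin.cons (b 0) (Fin.tail b) := (Fin.cons_self_tail b).symm
  set B : Fin p → Fin 2 := Fin.tail b
  set δ0 : ℂ := ϑ₁ f (Fin.cons 0 B) - ϑ₂ f (Fin.cons 0 B) with hδ0
  set δ1 : ℂ := ϑ₁ f (Fin.cons 1 B) - ϑ₂ f (Fin.cons 1 B) with hδ1
  have e0 : xiMat n ξ A0 1 * δ0 - xiMat n ξ A0 0 * δ1 = 0 := key f B A0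
  have e1 : xiMat n ξ A1 1 * δ0 - xiMat n ξ A1 0 * δ1 = 0 := key f B A1
  rw [m00, m01] at e0
  rw [m10, m11] at e1
  set d : ℂ := (⟨-x2, -x3⟩ : ℂ) * (⟨x2, -x3⟩ : ℂ) - (⟨x0, -x1⟩ : ℂ) * (⟨x0, x1⟩ : ℂ) with hd
  have hdne : d ≠ 0 := by
    intro hc
    have := congrArg Complex.re hc
    simp [hd, Complex.mul_re] at this
    apply hsum
    nlinarith [this]
  have k0 : d * δ0 = 0 := by
    rw [hd]; linear_combination (⟨x2, -x3⟩ : ℂ) * e0 - (⟨x0, x1⟩ : ℂ) * e1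
  have k1 : d * δ1 = 0 := by
    rw [hd]; linear_combination (⟨x0, -x1⟩ : ℂ) * e0 - (⟨-x2, -x3⟩ : ℂ) * e1
  have hδ0z : δ0 = 0 := by
    rcases mul_eq_zero.mp k0 with hc | hc
    · exact absurd hc hdne
    · exact hc
  have hδ1z : δ1 = 0 := by
    rcases mul_eq_zero.mp k1 with hc | hc
    · exact absurd hc hdne
    · exact hc
  have : ϑ₁ f (Fin.cons (b 0) B) = ϑ₂ f (Fin.cons (b 0) B) := by
    rcases (show b 0 = 0 ∨ b 0 = 1 by omega) with h' | h' <;> rw [h'] <;> [skip; skip] <;> first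
      | exact sub_eq_zero.mp hδ0z
      | exact sub_eq_zero.mp hδ1z
  rw [hb]; exact this
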